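/- Let G be an abelian Hausdorff topological group such that the subspace topology on every countable subgroup H of G is finer than the Bohr topology of H. If the Bohr topology of every countable abelian group has no non-trivial convergent sequences, then G has no non-trivial convergent sequences. -/

import Mathlib

open Filter

/-- The Bohr topology of an abelian group. -/
noncomputable def bohrTopology (A : Type*) [AddCommGroup A] : TopologicalSpace A :=
  ⨅ φ : A →+ AddCircle (1 : ℝ), TopologicalSpace.induced φ inferInstance

lemma countable_addSubgroup_closure {G : Type} [AddCommGroup G] {s : Set G}
    (hs : s.Countable) : ((AddSubgroup.closure s : AddSubgroup G) : Set G).Countable := by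
  haveI := hs.to_subtype
  let f : List s × List s → G := fun p =>
    (p.1.map Subtype.val).sum - (p.2.map Subtype.val).sum
  have key : ((AddSubgroup.closure s : AddSubgroup G) : Set G) ⊆ Set.range f := by
    intro g hg
    refine AddSubgroup.closure_induction ?_ ?_ ?_ ?_ hg
    · intro a ha; exact ⟨([⟨a, ha⟩], []), by simp [f]⟩
    · exact ⟨([], []), by simp [f]⟩
    · rintro a b _ _ ⟨⟨l₁, l₂⟩, rfl⟩ ⟨⟨m₁, m₂⟩, rfl⟩
      refine ⟨(l₁ ++ m₁, l₂ ++ m₂), ?_⟩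
      simp [f]; abel
    · rintro a _ ⟨⟨l₁, l₂⟩, rfl⟩
      exact ⟨(l₂, l₁), by simp [f]⟩
  exact (Set.countable_range f).mono key

/-- If the subspace topology on every countable subgroup of an abelian
topological group `G` is finer than its Bohr topology, and (Glicksberg) the
Bohr topology of every countable abelian group has no non-trivial convergent
sequences, then `G` has no non-trivial convergent sequences. -/
theorem no_nontrivial_convergent_sequences {G : Type} [AddCommGroup G]
    [TopologicalSpace G] [IsTopologicalAddGroup G] [T2Space G]
    (h : ∀ H : AddSubgroup G, (H : Set G).Countable →
      (inferInstance : TopologicalSpace H) ≤ bohrTopology H)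
    (glicksberg : ∀ (H : Type) [AddCommGroup H] [Countable H],
      ∀ u : ℕ → H, Function.Injective u → ∀ x : H,
        ¬ Tendsto u atTop (@nhds H (bohrTopology H) x)) :
    ∀ u : ℕ → G, Function.Injective u → ∀ x : G, ¬ Tendsto u atTop (nhds x) := by
  intro u hu x hx
  set s : Set G := Set.range u ∪ {x} with hs_def
  have hs : s.Countable := (Set.countable_range u).union (Set.countable_singleton x)
  set H := AddSubgroup.closure s with hH
  have hHc : (H : Set G).Countable := countable_addSubgroup_closure hs
  have hxH : x ∈ H := AddSubgroup.subset_closure (Or.inr rfl)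
  have huH : ∀ n, u n ∈ H := fun n => AddSubgroup.subset_closure (Or.inl ⟨n, rfl⟩)
  haveI : Countable H := hHc.to_subtype
  set v : ℕ → H := fun n => ⟨u n, huH n⟩ with hv_def
  have hv : Function.Injective v := fun a b hab => hu (congrArg Subtype.val hab)
  have hvt : Tendsto v atTop (nhds (⟨x, hxH⟩ : H)) := by
    rw [tendsto_subtype_rng]
    exact hx
  have hvt2 : Tendsto v atTop (@nhds H (bohrTopology H) ⟨x, hxH⟩) :=
    hvt.mono_right (nhds_mono (h H hHc))
  exact glicksberg H v hv ⟨x, hxH⟩ hvt2
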